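/- Let N ∈ ℕ with N ≥ 1, let L ∈ Matrix (Fin N) (Fin N) ℂ satisfy L·𝟙 = 0, suppose 0 is a root of the characteristic polynomial of L with algebraic multiplicity exactly 1, and let K > 0 be a real number such that every nonzero eigenvalue λ of L satisfies |λ|² < 2·K·Re(λ). Let ℓ₁ be the first row of L, 𝟙ℓ₁ the rank-one matrix with every row equal to ℓ₁, and A := I + (1/K)·(𝟙ℓ₁ − L). Then there exist constants C > 0 and ρ ∈ (0,1) such that for every x ∈ ℂ^N with first coordinate x₁ = 0 and every k ∈ ℕ, ‖Aᵏ·x‖ ≤ C·ρᵏ·‖x‖. -/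

import Mathlib

open Matrix Module Filter
open scoped NNReal ENNReal Matrix.Norms.L2Operator

lemma geom_decay_of_spectralRadius_lt_one {𝔸 : Type*} [NormedRing 𝔸] [NormedAlgebra ℂ 𝔸]
    [CompleteSpace 𝔸] (a : 𝔸) (h : spectralRadius ℂ a < 1) :
    ∃ C > (0:ℝ), ∃ ρ ∈ Set.Ioo (0:ℝ) 1, ∀ k : ℕ, ‖a ^ k‖ ≤ C * ρ ^ k := by
  obtain ⟨r, hr1, hr2⟩ := ENNReal.lt_iff_exists_nnreal_btwn.mp h
  set ρ : ℝ≥0 := max r (1/2) with hρdef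
  have hρ1 : spectralRadius ℂ a < (ρ : ℝ≥0∞) := by
    refine lt_of_lt_of_le hr1 ?_
    exact_mod_cast le_max_left r (1/2 : ℝ≥0)
  have hr2' : r < 1 := by exact_mod_cast hr2
  have hρlt1 : ρ < 1 := max_lt hr2' (by exact_mod_cast (by norm_num : ((1:ℝ)/2) < 1))
  have hρ0 : 0 < ρ := lt_of_lt_of_le (by exact_mod_cast (by norm_num : (0:ℝ) < 1/2)) (le_max_right _ _)
  have htends := spectrum.pow_nnnorm_pow_one_div_tendsto_nhds_spectralRadius a
  have hev : ∀ᶠ n : ℕ in atTop, (‖a ^ n‖₊ : ℝ≥0∞) ^ (1/(n:ℝ)) < (ρ : ℝ≥0∞) :=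
    htends.eventually_lt_const hρ1
  obtain ⟨n₀, hn₀⟩ := eventually_atTop.mp hev
  set m := max n₀ 1 with hm
  have key : ∀ n, m ≤ n → ‖a ^ n‖ ≤ (ρ : ℝ)^n := by
    intro n hn
    have h1 : 1 ≤ n := le_trans (le_max_right _ _) hn
    have hx := hn₀ n (le_trans (le_max_left _ _) hn)
    have hne : (n : ℝ) ≠ 0 := by positivity
    have hlt : (‖a ^ n‖₊ : ℝ≥0∞) < ((ρ : ℝ≥0∞)) ^ (n : ℝ) := by
      calc (‖a ^ n‖₊ : ℝ≥0∞) = ((‖a ^ n‖₊ : ℝ≥0∞) ^ (1/(n:ℝ))) ^ (n:ℝ) := by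
            rw [← ENNReal.rpow_mul, one_div, inv_mul_cancel₀ hne, ENNReal.rpow_one]
        _ < (ρ : ℝ≥0∞) ^ (n : ℝ) := by
            exact ENNReal.rpow_lt_rpow hx (by positivity)
    rw [ENNReal.rpow_natCast, ← ENNReal.coe_pow, ENNReal.coe_lt_coe] at hlt
    have := hlt.le
    calc ‖a ^ n‖ = ((‖a ^ n‖₊ : ℝ)) := rfl
      _ ≤ ((ρ ^ n : ℝ≥0) : ℝ) := by exact_mod_cast this
      _ = (ρ : ℝ)^n := by push_cast; ring
  set S : ℝ := ∑ j ∈ Finset.range (m + 1), ‖a ^ j‖ / (ρ : ℝ)^j with hSdef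
  have hS : 0 ≤ S := Finset.sum_nonneg fun j _ => by positivity
  set C : ℝ := 1 + S with hC
  have hCpos : 0 < C := by linarith
  refine ⟨C, hCpos, (ρ : ℝ), ⟨by exact_mod_cast hρ0, by exact_mod_cast hρlt1⟩, fun k => ?_⟩
  by_cases hk : k ≤ m
  · have hmem : k ∈ Finset.range (m + 1) := Finset.mem_range.mpr (by omega)
    have hle : ‖a ^ k‖ / (ρ : ℝ)^k ≤ C := by
      have h2 := Finset.single_le_sum (f := fun j => ‖a ^ j‖ / (ρ : ℝ)^j)
        (fun j _ => by positivity) hmem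
      have h3 : ‖a ^ k‖ / (ρ : ℝ)^k ≤ S := h2
      linarith
    have hρk : (0:ℝ) < (ρ:ℝ)^k := by positivity
    calc ‖a ^ k‖ = (‖a ^ k‖ / (ρ : ℝ)^k) * (ρ:ℝ)^k := by field_simp
      _ ≤ C * (ρ:ℝ)^k := mul_le_mul_of_nonneg_right hle hρk.le
  · have : ‖a ^ k‖ ≤ (ρ:ℝ)^k := key k (by omega)
    have hC1 : 1 ≤ C := by linarith
    nlinarith [pow_nonneg (by positivity : (0:ℝ) ≤ (ρ:ℝ)) k]

lemma mem_spectrum_of_eig {n : Type*} [Fintype n] [DecidableEq n]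
    (M : Matrix n n ℂ) {μ : ℂ} {v : n → ℂ} (hv : v ≠ 0)
    (h : M *ᵥ v = μ • v) : μ ∈ spectrum ℂ M := by
  rw [spectrum.mem_iff]
  intro hu
  rw [Matrix.isUnit_iff_isUnit_det, isUnit_iff_ne_zero] at hu
  apply hu
  rw [← Matrix.exists_mulVec_eq_zero_iff]
  refine ⟨v, hv, ?_⟩
  rw [Matrix.sub_mulVec, Algebra.algebraMap_eq_smul_one, Matrix.smul_mulVec,
    Matrix.one_mulVec, h, sub_self]

lemma eig_of_mem_spectrum {n : Type*} [Fintype n] [DecidableEq n]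
    (M : Matrix n n ℂ) {μ : ℂ} (h : μ ∈ spectrum ℂ M) :
    ∃ v, v ≠ 0 ∧ M *ᵥ v = μ • v := by
  rw [spectrum.mem_iff, Matrix.isUnit_iff_isUnit_det, isUnit_iff_ne_zero, not_not,
    ← Matrix.exists_mulVec_eq_zero_iff] at h
  obtain ⟨v, hv, hmv⟩ := h
  refine ⟨v, hv, ?_⟩
  rw [Matrix.sub_mulVec, Algebra.algebraMap_eq_smul_one, Matrix.smul_mulVec,
    Matrix.one_mulVec, sub_eq_zero] at hmv
  exact hmv.symm

lemma mult_contradiction {N : ℕ} (hN : 1 ≤ N) (L : Matrix (Fin N) (Fin N) ℂ)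
    (hL : L *ᵥ (fun _ => (1 : ℂ)) = 0)
    (h0 : (Matrix.charpoly L).rootMultiplicity 0 = 1)
    {v : Fin N → ℂ} (hv : v ≠ 0) (hv0 : v ⟨0, hN⟩ = 0) {c : ℂ}
    (hLv : L *ᵥ v = fun _ => c) : False := by
  set φ : Module.End ℂ (Fin N → ℂ) := Matrix.toLin' L with hφdef
  have hφchar : φ.charpoly = L.charpoly := by
    have h1 := LinearMap.charpoly_toMatrix φ (Pi.basisFun ℂ (Fin N))
    rw [LinearMap.toMatrix_eq_toMatrix', hφdef, LinearMap.toMatrix'_toLin'] at h1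
    exact h1.symm
  have hfin : finrank ℂ (φ.maxGenEigenspace 0) = 1 := by
    rw [LinearMap.finrank_maxGenEigenspace_zero_eq, ← Polynomial.rootMultiplicity_eq_natTrailingDegree',
      hφchar, h0]
  set o : Fin N → ℂ := fun _ => (1 : ℂ) with ho
  have hone : o ∈ φ.maxGenEigenspace 0 := by
    rw [Module.End.mem_maxGenEigenspace]
    exact ⟨1, by simpa [hφdef, Matrix.toLin'_apply, ho] using hL⟩
  have hvmem : v ∈ φ.maxGenEigenspace 0 := by
    rw [Module.End.mem_maxGenEigenspace]
    refine ⟨2, ?_⟩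
    have h2 : (fun _ => c) = c • o := by funext i; simp [ho]
    simp only [zero_smul, sub_zero, pow_two, Module.End.mul_apply]
    simp [hφdef, Matrix.toLin'_apply, hLv, h2, Matrix.mulVec_smul, hL]
  have hind : LinearIndependent ℂ ![o, v] := by
    rw [LinearIndependent.pair_iff]
    intro s t hst
    have h1 : s * o ⟨0, hN⟩ + t * v ⟨0, hN⟩ = 0 := congrFun hst ⟨0, hN⟩
    rw [hv0, ho] at h1
    simp at h1
    subst h1
    constructor
    · rfl
    · by_contra ht
      apply hv
      have := hst
      rw [zero_smul, zero_add] at this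
      have := smul_eq_zero.mp this
      tauto
  have hle : Submodule.span ℂ (Set.range ![o, v]) ≤ φ.maxGenEigenspace 0 := by
    rw [Submodule.span_le]
    rintro x ⟨i, rfl⟩
    fin_cases i
    · exact hone
    · exact hvmem
  have h2 : finrank ℂ (Submodule.span ℂ (Set.range ![o, v])) = 2 := by
    rw [finrank_span_eq_card hind]
    simp
  have := Submodule.finrank_mono hle
  rw [h2, hfin] at this
  omega

lemma nnnorm_lt_one_of_gain {K : ℝ} (hK : 0 < K) {μ lam : ℂ} (hlam : lam = (K:ℂ) * (1 - μ))
    (hg : ‖lam‖ ^ 2 < 2 * K * lam.re) : ‖μ‖₊ < 1 := by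
  have ha : lam.re = K * (1 - μ.re) := by
    rw [hlam]; simp [Complex.mul_re, Complex.sub_re, Complex.sub_im]
  have hb : lam.im = K * (-μ.im) := by
    rw [hlam]; simp [Complex.mul_im, Complex.sub_re, Complex.sub_im]
  have habs : ‖lam‖ ^ 2 = lam.re^2 + lam.im^2 := by
    rw [Complex.sq_norm, Complex.normSq_apply]; ring
  have habsμ : ‖μ‖ ^ 2 = μ.re^2 + μ.im^2 := by
    rw [Complex.sq_norm, Complex.normSq_apply]; ring
  rw [habs, ha, hb] at hg
  have hmulK : (1 - μ.re)^2 + μ.im^2 < 2*(1-μ.re) := by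
    have h1 : K^2 * ((1-μ.re)^2 + μ.im^2) < K^2 * (2*(1-μ.re)) := by
      calc K^2 * ((1-μ.re)^2 + μ.im^2) = (K*(1-μ.re))^2 + (K*(-μ.im))^2 := by ring
        _ < 2*K*(K*(1-μ.re)) := hg
        _ = K^2 * (2*(1-μ.re)) := by ring
    exact lt_of_mul_lt_mul_left h1 (by positivity)
  have h2 : ‖μ‖ ^ 2 < 1 := by rw [habsμ]; nlinarith
  have h3 : ‖μ‖ < 1 := by nlinarith [norm_nonneg μ]
  exact_mod_cast h3

theorem stmt_6 (N : ℕ) (hN : 1 ≤ N) (L : Matrix (Fin N) (Fin N) ℂ)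
    (hL : L *ᵥ (fun _ => (1 : ℂ)) = 0)
    (h0 : (Matrix.charpoly L).rootMultiplicity 0 = 1)
    (K : ℝ) (hK : 0 < K)
    (hgain : ∀ z ∈ spectrum ℂ L, z ≠ 0 → ‖z‖ ^ 2 < 2 * K * z.re)
    (A : Matrix (Fin N) (Fin N) ℂ)
    (hA : A = (1 : Matrix (Fin N) (Fin N) ℂ) +
        (1 / (K : ℂ)) • (Matrix.of (fun _ j => L ⟨0, hN⟩ j) - L)) :
    ∃ C > (0 : ℝ), ∃ ρ ∈ Set.Ioo (0 : ℝ) 1,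
      ∀ x : EuclideanSpace ℂ (Fin N), x ⟨0, hN⟩ = 0 →
        ∀ k : ℕ, ‖Matrix.toEuclideanLin (A ^ k) x‖ ≤ C * ρ ^ k * ‖x‖ := by
  have hKne : (K : ℂ) ≠ 0 := by exact_mod_cast hK.ne'
  set i0 : Fin N := ⟨0, hN⟩ with hi0
  -- first row of A is the first row of the identity
  have hrowA : ∀ j, A i0 j = (1 : Matrix (Fin N) (Fin N) ℂ) i0 j := by
    intro j
    rw [hA]
    simp [Matrix.add_apply, Matrix.smul_apply, Matrix.sub_apply, Matrix.of_apply]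
  have hArow : ∀ w : Fin N → ℂ, (A *ᵥ w) i0 = w i0 := by
    intro w
    have h1 : (A *ᵥ w) i0 = ((1 : Matrix (Fin N) (Fin N) ℂ) *ᵥ w) i0 := by
      simp only [Matrix.mulVec, dotProduct]
      exact Finset.sum_congr rfl fun j _ => by rw [hrowA j]
    rw [h1, Matrix.one_mulVec]
  set P : Matrix (Fin N) (Fin N) ℂ :=
    Matrix.diagonal (fun i => if i = i0 then 0 else 1) with hPdef
  have hPv : ∀ w : Fin N → ℂ, w i0 = 0 → P *ᵥ w = w := by
    intro w hw
    funext i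
    rw [hPdef, Matrix.mulVec_diagonal]
    by_cases hi : i = i0
    · subst hi; simp [hw]
    · simp [hi]
  have hPv0 : ∀ w : Fin N → ℂ, (P *ᵥ w) i0 = 0 := by
    intro w
    rw [hPdef, Matrix.mulVec_diagonal]
    simp
  set B : Matrix (Fin N) (Fin N) ℂ := A * P with hBdef
  have hBA : ∀ w : Fin N → ℂ, w i0 = 0 → B *ᵥ w = A *ᵥ w := by
    intro w hw
    rw [hBdef, ← Matrix.mulVec_mulVec, hPv w hw]
  have hpow : ∀ w : Fin N → ℂ, w i0 = 0 →
      ∀ k : ℕ, (A ^ k) *ᵥ w = (B ^ k) *ᵥ w ∧ ((A ^ k) *ᵥ w) i0 = 0 := by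
    intro w hw k
    induction k with
    | zero => simp [Matrix.one_mulVec, hw]
    | succ k ih =>
      constructor
      · rw [pow_succ', pow_succ', ← Matrix.mulVec_mulVec, ← Matrix.mulVec_mulVec, ih.1,
          ← ih.1, hBA _ ih.2, ih.1]
      · rw [pow_succ', ← Matrix.mulVec_mulVec, hArow]
        exact ih.2
  -- all eigenvalues of B have modulus < 1
  have hspec : ∀ μ ∈ spectrum ℂ B, ‖μ‖₊ < 1 := by
    intro μ hμ
    obtain ⟨v, hv, hBv⟩ := eig_of_mem_spectrum B hμ
    by_cases hμ0 : μ = 0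
    · subst hμ0; simp
    have hv0 : v i0 = 0 := by
      have h1 : (B *ᵥ v) i0 = μ * v i0 := by rw [hBv]; simp
      have h2 : (B *ᵥ v) i0 = 0 := by
        rw [hBdef, ← Matrix.mulVec_mulVec, hArow]
        exact hPv0 v
      rw [h2] at h1
      exact (mul_eq_zero.mp h1.symm).resolve_left hμ0
    have hAv : A *ᵥ v = μ • v := by rw [← hBA v hv0]; exact hBv
    set c : ℂ := (fun j => L i0 j) ⬝ᵥ v with hcdef
    have hofv : (Matrix.of (fun _ j => L i0 j) : Matrix (Fin N) (Fin N) ℂ) *ᵥ v = fun _ => c := by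
      funext i
      rfl
    have hAv2 : v + (1/(K:ℂ)) • ((fun _ => c) - L *ᵥ v) = μ • v := by
      rw [← hofv]
      rw [hA, Matrix.add_mulVec, Matrix.one_mulVec, Matrix.smul_mulVec,
        Matrix.sub_mulVec] at hAv
      exact hAv
    have hLveq : L *ᵥ v = (fun _ => c) + ((K:ℂ)*(1-μ)) • v := by
      funext i
      have h := congrFun hAv2 i
      simp only [Pi.add_apply, Pi.smul_apply, Pi.sub_apply, smul_eq_mul] at h ⊢
      field_simp at h
      linear_combination -h
    by_cases hμ1 : μ = 1
    · exfalso
      refine mult_contradiction hN L hL h0 hv hv0 (c := c) ?_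
      rw [hLveq, hμ1]
      funext i
      simp
    · set lam : ℂ := (K:ℂ)*(1-μ) with hlamdef
      have hlamne : lam ≠ 0 := mul_ne_zero hKne (sub_ne_zero.mpr (Ne.symm hμ1))
      set o : Fin N → ℂ := fun _ => (1:ℂ) with ho
      set w : Fin N → ℂ := v + (c/lam) • o with hwdef
      have hLw : L *ᵥ w = lam • w := by
        rw [hwdef, Matrix.mulVec_add, Matrix.mulVec_smul, ho, hL, smul_zero, add_zero, hLveq]
        funext i
        simp only [Pi.add_apply, Pi.smul_apply, smul_eq_mul, ho]
        field_simp
        ring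
      have hwne : w ≠ 0 := by
        by_cases hc : c = 0
        · rw [hwdef, hc, zero_div, zero_smul, add_zero]
          exact hv
        · intro hw0
          have h1 : w i0 = 0 := by rw [hw0]; rfl
          rw [hwdef] at h1
          simp only [Pi.add_apply, Pi.smul_apply, smul_eq_mul, hv0, ho, mul_one, zero_add] at h1
          exact hc ((div_eq_zero_iff.mp h1).resolve_right hlamne)
      have hlam_spec : lam ∈ spectrum ℂ L := mem_spectrum_of_eig L hwne hLw
      exact nnnorm_lt_one_of_gain hK hlamdef (hgain lam hlam_spec hlamne)
  haveI : Nontrivial (Matrix (Fin N) (Fin N) ℂ) :=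
    ⟨⟨1, 0, fun h => by simpa using congrFun (congrFun h i0) i0⟩⟩
  haveI : CompleteSpace (Matrix (Fin N) (Fin N) ℂ) :=
    FiniteDimensional.complete ℂ _
  have hsr : spectralRadius ℂ B < 1 := by
    have h1 := spectrum.spectralRadius_lt_of_forall_lt (a := B) (r := 1) hspec
    simpa using h1
  obtain ⟨C, hC, ρ, hρ, hbound⟩ := geom_decay_of_spectralRadius_lt_one B hsr
  refine ⟨C, hC, ρ, hρ, fun x hx k => ?_⟩
  have hx' : (WithLp.ofLp x) i0 = 0 := hx
  have heq : Matrix.toEuclideanLin (A ^ k) x = Matrix.toEuclideanLin (B ^ k) x := by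
    rw [Matrix.toEuclideanLin_apply, Matrix.toEuclideanLin_apply, (hpow _ hx' k).1]
  rw [heq]
  calc ‖Matrix.toEuclideanLin (B ^ k) x‖ ≤ ‖B ^ k‖ * ‖x‖ := by
        rw [Matrix.l2_opNorm_def]
        exact ((Matrix.toEuclideanLin.trans LinearMap.toContinuousLinearMap) (B ^ k)).le_opNorm x
    _ ≤ (C * ρ ^ k) * ‖x‖ := mul_le_mul_of_nonneg_right (hbound k) (norm_nonneg x)
    _ = C * ρ ^ k * ‖x‖ := by ring
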